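/- T_H semantically entails both ∀x(x∈H⁻ → x∈H⁺) and ∀x(x∈H⁺ → x∈H⁻), and hence, by extensionality, T_H semantically entails H⁺ = H⁻. -/

import Mathlib

open FirstOrder FirstOrder.Language

namespace CoRussellParadox

/-- The language `L'` with a single binary relation symbol `∈` and four constant
symbols `A`, `B`, `H⁺`, `H⁻` (coded as `Fin 4`). -/
def L : Language :=
  ⟨fun n => match n with | 0 => Fin 4 | _ => Empty,
   fun n => match n with | 2 => Unit | _ => Empty⟩

/-- The membership relation symbol. -/
def memRel : L.Relations 2 := Unit.unit

/-- The constant symbol `A`. -/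
def cA : L.Constants := (0 : Fin 4)
/-- The constant symbol `B`. -/
def cB : L.Constants := (1 : Fin 4)
/-- The constant symbol `H⁺`. -/
def cHp : L.Constants := (2 : Fin 4)
/-- The constant symbol `H⁻`. -/
def cHm : L.Constants := (3 : Fin 4)

/-- `memF t₁ t₂` is the atomic formula `t₁ ∈ t₂`. -/
def memF {n : ℕ} (t₁ t₂ : L.Term (Empty ⊕ Fin n)) : L.BoundedFormula Empty n :=
  memRel.boundedFormula₂ t₁ t₂

/-- Inclusion of a term in context `n` into the larger context `n + k`. -/
def tl {n : ℕ} (k : ℕ) (t : L.Term (Empty ⊕ Fin n)) : L.Term (Empty ⊕ Fin (n + k)) :=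
  t.relabel (Sum.map id (Fin.castAdd k))

/-- `z = ⟨a,b⟩` (Kuratowski pair), as the formula
`∃p∃q(∀x(x∈p ↔ x=a) ∧ ∀x(x∈q ↔ (x=a ∨ x=b)) ∧ ∀x(x∈z ↔ (x=p ∨ x=q)))`. -/
def isPairF {n : ℕ} (z a b : L.Term (Empty ⊕ Fin n)) : L.BoundedFormula Empty n :=
  ∃' ∃' (
    (∀' (memF (&⟨n + 2, by omega⟩) (&⟨n, by omega⟩) ⇔
        ((&(⟨n + 2, by omega⟩ : Fin (n + 3))) =' tl 3 a))) ⊓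
    (∀' (memF (&⟨n + 2, by omega⟩) (&⟨n + 1, by omega⟩) ⇔
        (((&(⟨n + 2, by omega⟩ : Fin (n + 3))) =' tl 3 a) ⊔
         ((&(⟨n + 2, by omega⟩ : Fin (n + 3))) =' tl 3 b)))) ⊓
    (∀' (memF (&⟨n + 2, by omega⟩) (tl 3 z) ⇔
        (((&(⟨n + 2, by omega⟩ : Fin (n + 3))) =' (&⟨n, by omega⟩)) ⊔
         ((&(⟨n + 2, by omega⟩ : Fin (n + 3))) =' (&⟨n + 1, by omega⟩))))))

/-- Extensionality: `∀y∀z(∀x(x∈y ↔ x∈z) → y=z)`. -/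
def extAx : L.Sentence :=
  ∀' ∀' ((∀' (memF (&2) (&0) ⇔ memF (&2) (&1))) ⟹ ((&0) =' (&1)))

/-- Pairing: `∀a∀b∃y∀x(x∈y ↔ (x=a ∨ x=b))`. -/
def pairAx : L.Sentence :=
  ∀' ∀' ∃' ∀' (memF (&3) (&2) ⇔ (((&3) =' (&0)) ⊔ ((&3) =' (&1))))

/-- Extracting: `∀a∃y∀x(x∈y ↔ ∃z(z=⟨a,x⟩ ∧ z∈a))`. -/
def extractAx : L.Sentence :=
  ∀' ∃' ∀' (memF (&2) (&1) ⇔ ∃' (isPairF (&3) (&0) (&2) ⊓ memF (&3) (&0)))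

/-- `w = v[v]`, i.e. `∀u(u∈w ↔ ∃z(z=⟨v,u⟩ ∧ z∈v))`, here with `v = &1`, `w = &2`
in context `3` (as used in the axioms for `A` and `B`). -/
def wEqExtractF : L.BoundedFormula Empty 3 :=
  ∀' (memF (&3) (&2) ⇔ ∃' (isPairF (&4) (&1) (&3) ⊓ memF (&4) (&1)))

/-- The axiom `∀x(x∈A ↔ ∃v∃w(x=⟨v,w⟩ ∧ (w∈w ∨ w=v[v])))`. -/
def axA : L.Sentence :=
  ∀' (memF (&0) (Constants.term cA) ⇔
    ∃' ∃' (isPairF (&0) (&1) (&2) ⊓ (memF (&2) (&2) ⊔ wEqExtractF)))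

/-- The axiom `∀x(x∈B ↔ ∃v∃w(x=⟨v,w⟩ ∧ (w∈w ∧ ¬w=v[v])))`. -/
def axB : L.Sentence :=
  ∀' (memF (&0) (Constants.term cB) ⇔
    ∃' ∃' (isPairF (&0) (&1) (&2) ⊓ (memF (&2) (&2) ⊓ ∼wEqExtractF)))

/-- The axiom `∀x(x∈H⁺ ↔ ∃z(z=⟨A,x⟩ ∧ z∈A))`. -/
def axHp : L.Sentence :=
  ∀' (memF (&0) (Constants.term cHp) ⇔
    ∃' (isPairF (&1) (Constants.term cA) (&0) ⊓ memF (&1) (Constants.term cA)))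

/-- The axiom `∀x(x∈H⁻ ↔ ∃z(z=⟨B,x⟩ ∧ z∈B))`. -/
def axHm : L.Sentence :=
  ∀' (memF (&0) (Constants.term cHm) ⇔
    ∃' (isPairF (&1) (Constants.term cB) (&0) ⊓ memF (&1) (Constants.term cB)))

/-- The theory `T_H`: extensionality, pairing, extracting, and the defining axioms
of `A`, `B`, `H⁺` and `H⁻`. -/
def TH : L.Theory := {extAx, pairAx, extractAx, axA, axB, axHp, axHm}

section Semantics

set_option linter.unusedSectionVars false

variable {M : Type} [L.Structure M]

def mem (x y : M) : Prop := Structure.RelMap (memRel) ![x, y]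

def IsPairM (z a b : M) : Prop :=
  ∃ p q : M, (∀ x, mem x p ↔ x = a) ∧ (∀ x, mem x q ↔ x = a ∨ x = b) ∧
    (∀ x, mem x z ↔ x = p ∨ x = q)

lemma snoc3_castAdd {n : ℕ} (xs : Fin n → M) (p q r : M) (i : Fin n) :
    (Fin.snoc (Fin.snoc (Fin.snoc xs p) q) r : Fin (n+3) → M) (Fin.castAdd 3 i) = xs i := by
  have h : (Fin.castAdd 3 i : Fin (n+3)) = ((i.castSucc).castSucc).castSucc := rfl
  rw [h, Fin.snoc_castSucc, Fin.snoc_castSucc, Fin.snoc_castSucc]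

lemma snoc3_p {n : ℕ} (xs : Fin n → M) (p q r : M) :
    (Fin.snoc (Fin.snoc (Fin.snoc xs p) q) r : Fin (n+3) → M) ⟨n, by omega⟩ = p := by
  have h : (⟨n, by omega⟩ : Fin (n+3)) = (((Fin.last n).castSucc).castSucc) := rfl
  rw [h, Fin.snoc_castSucc, Fin.snoc_castSucc, Fin.snoc_last]

lemma snoc3_q {n : ℕ} (xs : Fin n → M) (p q r : M) :
    (Fin.snoc (Fin.snoc (Fin.snoc xs p) q) r : Fin (n+3) → M) ⟨n+1, by omega⟩ = q := by
  have h : (⟨n+1, by omega⟩ : Fin (n+3)) = ((Fin.last (n+1)).castSucc) := rfl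
  rw [h, Fin.snoc_castSucc, Fin.snoc_last]

lemma snoc3_r {n : ℕ} (xs : Fin n → M) (p q r : M) :
    (Fin.snoc (Fin.snoc (Fin.snoc xs p) q) r : Fin (n+3) → M) ⟨n+2, by omega⟩ = r := by
  have h : (⟨n+2, by omega⟩ : Fin (n+3)) = Fin.last (n+2) := rfl
  rw [h, Fin.snoc_last]

lemma snoc3_comp_castAdd {n : ℕ} (xs : Fin n → M) (p q r : M) :
    ((Fin.snoc (Fin.snoc (Fin.snoc xs p) q) r : Fin (n+3) → M) ∘ Fin.castAdd 3) = xs :=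
  funext fun i => snoc3_castAdd xs p q r i

lemma realize_memF {n : ℕ} (t₁ t₂ : L.Term (Empty ⊕ Fin n)) (v : Empty → M) (xs : Fin n → M) :
    (memF t₁ t₂).Realize v xs ↔ mem (t₁.realize (Sum.elim v xs)) (t₂.realize (Sum.elim v xs)) := by
  simp [memF, mem, BoundedFormula.realize_rel₂]

lemma realize_isPairF {n : ℕ} (z a b : L.Term (Empty ⊕ Fin n)) (v : Empty → M) (xs : Fin n → M) :
    (isPairF z a b).Realize v xs ↔
      IsPairM (z.realize (Sum.elim v xs)) (a.realize (Sum.elim v xs)) (b.realize (Sum.elim v xs)) := by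
  simp only [isPairF, BoundedFormula.realize_ex, BoundedFormula.realize_inf,
    BoundedFormula.realize_all, BoundedFormula.realize_iff, BoundedFormula.realize_sup,
    realize_memF, BoundedFormula.realize_bdEqual, IsPairM, tl, Term.realize_relabel,
    Term.realize_var, Sum.elim_inr]
  constructor
  · rintro ⟨p, q, ⟨h1, h2⟩, h3⟩
    refine ⟨p, q, fun x => ?_, fun x => ?_, fun x => ?_⟩
    · have := h1 x
      simpa [snoc3_p, snoc3_q, snoc3_r, snoc3_comp_castAdd, Sum.elim_comp_map] using this
    · have := h2 x
      simpa [snoc3_p, snoc3_q, snoc3_r, snoc3_comp_castAdd, Sum.elim_comp_map] using this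
    · have := h3 x
      simpa [snoc3_p, snoc3_q, snoc3_r, snoc3_comp_castAdd, Sum.elim_comp_map] using this
  · rintro ⟨p, q, h1, h2, h3⟩
    refine ⟨p, q, ⟨fun x => ?_, fun x => ?_⟩, fun x => ?_⟩
    · have := h1 x
      simpa [snoc3_p, snoc3_q, snoc3_r, snoc3_comp_castAdd, Sum.elim_comp_map] using this
    · have := h2 x
      simpa [snoc3_p, snoc3_q, snoc3_r, snoc3_comp_castAdd, Sum.elim_comp_map] using this
    · have := h3 x
      simpa [snoc3_p, snoc3_q, snoc3_r, snoc3_comp_castAdd, Sum.elim_comp_map] using this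


def EqExtract (w v : M) : Prop :=
  ∀ u, mem u w ↔ ∃ z : M, IsPairM z v u ∧ mem z v

lemma realize_wEqExtractF (v0 : Empty → M) (xs : Fin 3 → M) :
    wEqExtractF.Realize v0 xs ↔ EqExtract (xs 2) (xs 1) := by
  simp only [wEqExtractF, BoundedFormula.realize_all, BoundedFormula.realize_iff,
    BoundedFormula.realize_ex, BoundedFormula.realize_inf, realize_memF, realize_isPairF,
    Term.realize_var, Sum.elim_inr, EqExtract]
  constructor
  · intro h u
    have := h u
    simp [Fin.snoc] at this ⊢
    exact this
  · intro h u
    have := h u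
    simp [Fin.snoc] at this ⊢
    exact this

lemma realize_extAx (v0 : Empty → M) : extAx.Realize M ↔
    ∀ y z : M, (∀ x, mem x y ↔ mem x z) → y = z := by
  simp only [extAx, Sentence.Realize, Formula.Realize, BoundedFormula.realize_all,
    BoundedFormula.realize_imp, BoundedFormula.realize_iff, BoundedFormula.realize_bdEqual,
    realize_memF, Term.realize_var, Sum.elim_inr]
  constructor
  · intro h y z hy
    have := h y z (fun x => by simpa [Fin.snoc] using hy x)
    simpa [Fin.snoc] using this
  · intro h y z hy
    have := h y z (fun x => by simpa [Fin.snoc] using hy x)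
    simpa [Fin.snoc] using this


lemma realize_pairAx : pairAx.Realize M ↔
    ∀ a b : M, ∃ y : M, ∀ x, mem x y ↔ x = a ∨ x = b := by
  simp only [pairAx, Sentence.Realize, Formula.Realize, BoundedFormula.realize_all,
    BoundedFormula.realize_ex, BoundedFormula.realize_iff, BoundedFormula.realize_sup,
    BoundedFormula.realize_bdEqual, realize_memF, Term.realize_var, Sum.elim_inr]
  constructor
  · intro h a b
    obtain ⟨y, hy⟩ := h a b
    exact ⟨y, fun x => by simpa [Fin.snoc] using hy x⟩
  · intro h a b
    obtain ⟨y, hy⟩ := h a b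
    exact ⟨y, fun x => by simpa [Fin.snoc] using hy x⟩

lemma realize_extractAx : extractAx.Realize M ↔
    ∀ a : M, ∃ y : M, ∀ x, mem x y ↔ ∃ z : M, IsPairM z a x ∧ mem z a := by
  simp only [extractAx, Sentence.Realize, Formula.Realize, BoundedFormula.realize_all,
    BoundedFormula.realize_ex, BoundedFormula.realize_iff, BoundedFormula.realize_inf,
    realize_memF, realize_isPairF, Term.realize_var, Sum.elim_inr]
  constructor
  · intro h a
    obtain ⟨y, hy⟩ := h a
    exact ⟨y, fun x => by simpa [Fin.snoc] using hy x⟩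
  · intro h a
    obtain ⟨y, hy⟩ := h a
    exact ⟨y, fun x => by simpa [Fin.snoc] using hy x⟩

lemma realize_axA : axA.Realize M ↔
    ∀ x : M, mem x (cA : M) ↔ ∃ v w : M, IsPairM x v w ∧ (mem w w ∨ EqExtract w v) := by
  simp only [axA, Sentence.Realize, Formula.Realize, BoundedFormula.realize_all,
    BoundedFormula.realize_ex, BoundedFormula.realize_iff, BoundedFormula.realize_inf,
    BoundedFormula.realize_sup, realize_memF, realize_isPairF, realize_wEqExtractF,
    Term.realize_var, Term.realize_constants, Sum.elim_inr]
  constructor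
  · intro h x
    have := h x
    constructor
    · intro hx
      obtain ⟨v, w, h1, h2⟩ := this.1 (by simpa [Fin.snoc] using hx)
      exact ⟨v, w, by simpa [Fin.snoc] using h1, by simpa [Fin.snoc] using h2⟩
    · rintro ⟨v, w, h1, h2⟩
      have := this.2 ⟨v, w, by simpa [Fin.snoc] using h1, by simpa [Fin.snoc] using h2⟩
      simpa [Fin.snoc] using this
  · intro h x
    constructor
    · intro hx
      obtain ⟨v, w, h1, h2⟩ := (h x).1 (by simpa [Fin.snoc] using hx)
      exact ⟨v, w, by simpa [Fin.snoc] using h1, by simpa [Fin.snoc] using h2⟩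
    · rintro ⟨v, w, h1, h2⟩
      have := (h x).2 ⟨v, w, by simpa [Fin.snoc] using h1, by simpa [Fin.snoc] using h2⟩
      simpa [Fin.snoc] using this

lemma realize_axB : axB.Realize M ↔
    ∀ x : M, mem x (cB : M) ↔ ∃ v w : M, IsPairM x v w ∧ (mem w w ∧ ¬ EqExtract w v) := by
  simp only [axB, Sentence.Realize, Formula.Realize, BoundedFormula.realize_all,
    BoundedFormula.realize_ex, BoundedFormula.realize_iff, BoundedFormula.realize_inf,
    BoundedFormula.realize_not, realize_memF, realize_isPairF, realize_wEqExtractF,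
    Term.realize_var, Term.realize_constants, Sum.elim_inr]
  constructor
  · intro h x
    constructor
    · intro hx
      obtain ⟨v, w, h1, h2, h3⟩ := (h x).1 (by simpa [Fin.snoc] using hx)
      exact ⟨v, w, by simpa [Fin.snoc] using h1, by simpa [Fin.snoc] using h2,
        by simpa [Fin.snoc] using h3⟩
    · rintro ⟨v, w, h1, h2, h3⟩
      have := (h x).2 ⟨v, w, by simpa [Fin.snoc] using h1, by simpa [Fin.snoc] using h2,
        by simpa [Fin.snoc] using h3⟩
      simpa [Fin.snoc] using this
  · intro h x
    constructor
    · intro hx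
      obtain ⟨v, w, h1, h2, h3⟩ := (h x).1 (by simpa [Fin.snoc] using hx)
      exact ⟨v, w, by simpa [Fin.snoc] using h1, by simpa [Fin.snoc] using h2,
        by simpa [Fin.snoc] using h3⟩
    · rintro ⟨v, w, h1, h2, h3⟩
      have := (h x).2 ⟨v, w, by simpa [Fin.snoc] using h1, by simpa [Fin.snoc] using h2,
        by simpa [Fin.snoc] using h3⟩
      simpa [Fin.snoc] using this

lemma realize_axHp : axHp.Realize M ↔
    ∀ x : M, mem x (cHp : M) ↔ ∃ z : M, IsPairM z (cA : M) x ∧ mem z (cA : M) := by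
  simp only [axHp, Sentence.Realize, Formula.Realize, BoundedFormula.realize_all,
    BoundedFormula.realize_ex, BoundedFormula.realize_iff, BoundedFormula.realize_inf,
    realize_memF, realize_isPairF, Term.realize_var, Term.realize_constants, Sum.elim_inr]
  constructor
  · intro h x
    have := h x
    constructor
    · intro hx
      obtain ⟨z, h1, h2⟩ := this.1 (by simpa [Fin.snoc] using hx)
      exact ⟨z, by simpa [Fin.snoc] using h1, by simpa [Fin.snoc] using h2⟩
    · rintro ⟨z, h1, h2⟩
      have := this.2 ⟨z, by simpa [Fin.snoc] using h1, by simpa [Fin.snoc] using h2⟩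
      simpa [Fin.snoc] using this
  · intro h x
    constructor
    · intro hx
      obtain ⟨z, h1, h2⟩ := (h x).1 (by simpa [Fin.snoc] using hx)
      exact ⟨z, by simpa [Fin.snoc] using h1, by simpa [Fin.snoc] using h2⟩
    · rintro ⟨z, h1, h2⟩
      have := (h x).2 ⟨z, by simpa [Fin.snoc] using h1, by simpa [Fin.snoc] using h2⟩
      simpa [Fin.snoc] using this

lemma realize_axHm : axHm.Realize M ↔
    ∀ x : M, mem x (cHm : M) ↔ ∃ z : M, IsPairM z (cB : M) x ∧ mem z (cB : M) := by
  simp only [axHm, Sentence.Realize, Formula.Realize, BoundedFormula.realize_all,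
    BoundedFormula.realize_ex, BoundedFormula.realize_iff, BoundedFormula.realize_inf,
    realize_memF, realize_isPairF, Term.realize_var, Term.realize_constants, Sum.elim_inr]
  constructor
  · intro h x
    constructor
    · intro hx
      obtain ⟨z, h1, h2⟩ := (h x).1 (by simpa [Fin.snoc] using hx)
      exact ⟨z, by simpa [Fin.snoc] using h1, by simpa [Fin.snoc] using h2⟩
    · rintro ⟨z, h1, h2⟩
      have := (h x).2 ⟨z, by simpa [Fin.snoc] using h1, by simpa [Fin.snoc] using h2⟩
      simpa [Fin.snoc] using this
  · intro h x
    constructor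
    · intro hx
      obtain ⟨z, h1, h2⟩ := (h x).1 (by simpa [Fin.snoc] using hx)
      exact ⟨z, by simpa [Fin.snoc] using h1, by simpa [Fin.snoc] using h2⟩
    · rintro ⟨z, h1, h2⟩
      have := (h x).2 ⟨z, by simpa [Fin.snoc] using h1, by simpa [Fin.snoc] using h2⟩
      simpa [Fin.snoc] using this


lemma pair_inj {z a b c d : M} (h1 : IsPairM z a b) (h2 : IsPairM z c d) : a = c ∧ b = d := by
  obtain ⟨p, q, hp, hq, hz⟩ := h1
  obtain ⟨p', q', hp', hq', hz'⟩ := h2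
  have hpp : p = p' ∨ p = q' := (hz' p).1 ((hz p).2 (Or.inl rfl))
  have hqq : q = p' ∨ q = q' := (hz' q).1 ((hz q).2 (Or.inr rfl))
  have hq'q : q' = p ∨ q' = q := (hz q').1 ((hz' q').2 (Or.inr rfl))
  rcases hpp with h | h
  · have hac : a = c := by
      have h0 := (hp a).2 rfl
      rw [h] at h0
      exact (hp' a).1 h0
    rcases hqq with h2 | h2
    · have hbc : b = c := by
        have h0 := (hq b).2 (Or.inr rfl)
        rw [h2] at h0
        exact (hp' b).1 h0
      rcases hq'q with h3 | h3
      · have hda : d = a := by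
          have h0 := (hq' d).2 (Or.inr rfl)
          rw [h3] at h0
          exact (hp d).1 h0
        exact ⟨hac, hbc.trans (hac.symm.trans hda.symm)⟩
      · have h0 := (hq' d).2 (Or.inr rfl)
        rw [h3] at h0
        rcases (hq d).1 h0 with h4 | h4
        · exact ⟨hac, hbc.trans (hac.symm.trans h4.symm)⟩
        · exact ⟨hac, h4.symm⟩
    · have h0 := (hq b).2 (Or.inr rfl)
      rw [h2] at h0
      rcases (hq' b).1 h0 with h3 | h3
      · have hd := (hq' d).2 (Or.inr rfl)
        rw [← h2] at hd
        rcases (hq d).1 hd with h4 | h4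
        · exact ⟨hac, (h3.trans hac.symm).trans h4.symm⟩
        · exact ⟨hac, h4.symm⟩
      · exact ⟨hac, h3⟩
  · have hca : c = a := by
      have h0 := (hq' c).2 (Or.inl rfl)
      rw [← h] at h0
      exact (hp c).1 h0
    have hda : d = a := by
      have h0 := (hq' d).2 (Or.inr rfl)
      rw [← h] at h0
      exact (hp d).1 h0
    rcases hqq with h2 | h2
    · have hbc : b = c := by
        have h0 := (hq b).2 (Or.inr rfl)
        rw [h2] at h0
        exact (hp' b).1 h0
      exact ⟨hca.symm, hbc.trans (hca.trans hda.symm)⟩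
    · have h0 := (hq b).2 (Or.inr rfl)
      rw [h2] at h0
      rcases (hq' b).1 h0 with h3 | h3
      · exact ⟨hca.symm, (h3.trans hca).trans hda.symm⟩
      · exact ⟨hca.symm, h3⟩

lemma main (Am Bm Hp Hm : M)
    (ext : ∀ y z : M, (∀ x, mem x y ↔ mem x z) → y = z)
    (pairax : ∀ a b : M, ∃ y : M, ∀ x, mem x y ↔ x = a ∨ x = b)
    (hA : ∀ x : M, mem x Am ↔ ∃ v w : M, IsPairM x v w ∧ (mem w w ∨ EqExtract w v))
    (hB : ∀ x : M, mem x Bm ↔ ∃ v w : M, IsPairM x v w ∧ (mem w w ∧ ¬ EqExtract w v))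
    (hHp : ∀ x : M, mem x Hp ↔ ∃ z : M, IsPairM z Am x ∧ mem z Am)
    (hHm : ∀ x : M, mem x Hm ↔ ∃ z : M, IsPairM z Bm x ∧ mem z Bm) :
    (∀ x : M, mem x Hm → mem x Hp) ∧ (∀ x : M, mem x Hp → mem x Hm) ∧ Hp = Hm := by
  have mkPair : ∀ a b : M, ∃ z : M, IsPairM z a b := by
    intro a b
    obtain ⟨p, hp⟩ := pairax a a
    obtain ⟨q, hq⟩ := pairax a b
    obtain ⟨z, hz⟩ := pairax p q
    exact ⟨z, p, q, fun x => by simpa [or_self] using hp x, hq, hz⟩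
  have extract_unique : ∀ w w' v : M, EqExtract w v → EqExtract w' v → w = w' := by
    intro w w' v h1 h2
    exact ext w w' fun x => (h1 x).trans (h2 x).symm
  have hEHp : EqExtract Hp Am := hHp
  have hEHm : EqExtract Hm Bm := hHm
  -- `Hm` is not a member of itself
  have hHmHm : ¬ mem Hm Hm := by
    intro hmm
    obtain ⟨z, hz, hzB⟩ := (hHm Hm).1 hmm
    obtain ⟨v, w, hz', _, hne⟩ := (hB z).1 hzB
    obtain ⟨hv, hw⟩ := pair_inj hz hz'
    rw [← hv, ← hw] at hne
    exact hne hEHm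
  -- `Hm ⊆ Hp`
  have sub1 : ∀ x : M, mem x Hm → mem x Hp := by
    intro x hx
    obtain ⟨z, hz, hzB⟩ := (hHm x).1 hx
    obtain ⟨v, w, hz', hww, _⟩ := (hB z).1 hzB
    obtain ⟨hv, hw⟩ := pair_inj hz hz'
    rw [← hw] at hww
    obtain ⟨z', hz'p⟩ := mkPair Am x
    exact (hHp x).2 ⟨z', hz'p, (hA z').2 ⟨Am, x, hz'p, Or.inl hww⟩⟩
  -- `Hp ⊆ Hm`
  have sub2 : ∀ x : M, mem x Hp → mem x Hm := by
    intro x hx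
    obtain ⟨z, hz, hzA⟩ := (hHp x).1 hx
    obtain ⟨v, w, hz', hor⟩ := (hA z).1 hzA
    obtain ⟨hv, hw⟩ := pair_inj hz hz'
    rw [← hv, ← hw] at hor
    have hxx : mem x x := by
      rcases hor with h | h
      · exact h
      · have : x = Hp := extract_unique x Hp Am h hEHp
        rw [this] at hx ⊢
        exact hx
    have hne : ¬ EqExtract x Bm := by
      intro h
      have : x = Hm := extract_unique x Hm Bm h hEHm
      rw [this] at hxx
      exact hHmHm hxx
    obtain ⟨z', hz'p⟩ := mkPair Bm x
    exact (hHm x).2 ⟨z', hz'p, (hB z').2 ⟨Bm, x, hz'p, hxx, hne⟩⟩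
  exact ⟨sub1, sub2, ext Hp Hm fun x => ⟨sub2 x, sub1 x⟩⟩

end Semantics

/-- `T_H` semantically entails `∀x(x∈H⁻ → x∈H⁺)` and `∀x(x∈H⁺ → x∈H⁻)`, and hence,
by extensionality, `T_H` semantically entails `H⁺ = H⁻`. -/
theorem TH_Hp_eq_Hm :
    (TH ⊨ᵇ ((∀' (memF (&0) (Constants.term cHm) ⟹ memF (&0) (Constants.term cHp))) : L.Sentence)) ∧
    (TH ⊨ᵇ ((∀' (memF (&0) (Constants.term cHp) ⟹ memF (&0) (Constants.term cHm))) : L.Sentence)) ∧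
    (TH ⊨ᵇ (((Constants.term cHp : L.Term (Empty ⊕ Fin 0)) =' (Constants.term cHm)) : L.Sentence)) := by
  have key : ∀ (M : TH.ModelType),
      (∀ x : M, mem x (cHm : M) → mem x (cHp : M)) ∧
      (∀ x : M, mem x (cHp : M) → mem x (cHm : M)) ∧ (cHp : M) = (cHm : M) := by
    intro M
    have hext := (realize_extAx (M := M) default).1
      (TH.realize_sentence_of_mem (show extAx ∈ TH by simp [TH]))
    have hpair := (realize_pairAx (M := M)).1
      (TH.realize_sentence_of_mem (show pairAx ∈ TH by simp [TH]))
    have hA := (realize_axA (M := M)).1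
      (TH.realize_sentence_of_mem (show axA ∈ TH by simp [TH]))
    have hB := (realize_axB (M := M)).1
      (TH.realize_sentence_of_mem (show axB ∈ TH by simp [TH]))
    have hHp := (realize_axHp (M := M)).1
      (TH.realize_sentence_of_mem (show axHp ∈ TH by simp [TH]))
    have hHm := (realize_axHm (M := M)).1
      (TH.realize_sentence_of_mem (show axHm ∈ TH by simp [TH]))
    exact main (cA : M) (cB : M) (cHp : M) (cHm : M) hext hpair hA hB hHp hHm
  refine ⟨?_, ?_, ?_⟩
  · intro M v xs
    simp only [BoundedFormula.realize_all, BoundedFormula.realize_imp, realize_memF,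
      Term.realize_var, Term.realize_constants, Sum.elim_inr]
    intro x
    simpa [Fin.snoc] using (key M).1 x
  · intro M v xs
    simp only [BoundedFormula.realize_all, BoundedFormula.realize_imp, realize_memF,
      Term.realize_var, Term.realize_constants, Sum.elim_inr]
    intro x
    simpa [Fin.snoc] using (key M).2.1 x
  · intro M v xs
    simp only [BoundedFormula.realize_bdEqual, Term.realize_constants]
    exact (key M).2.2

end CoRussellParadox
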